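/- Let J = [a, b] be a nonempty compact interval of ℝ, and suppose u_T is left continuous, takes values in J, and satisfies the Oleinik condition (O) at T. Then the function U_o^♯(x) := sup { U_o(x) : U_o ∈ II_T(U_T; J) } is finite everywhere and for all x₁ < x₂ satisfies a·(x₂ − x₁) ≤ U_o^♯(x₂) − U_o^♯(x₁) ≤ b·(x₂ − x₁); in particular U_o^♯ is Lipschitz with a.e. derivative in J. -/

import Mathlib

open Filter MeasureTheory

/-- Condition (f): `f` is `C²`, strongly convex (`f'' > 0` everywhere), and
`f' → ∓∞` at `∓∞`. -/
def CondF (f : ℝ → ℝ) : Prop :=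
  ContDiff ℝ 2 f ∧ (∀ x, 0 < deriv (deriv f) x) ∧
    Tendsto (deriv f) atBot atBot ∧ Tendsto (deriv f) atTop atTop

/-- The Legendre transform `f*(y) = sup_x (y·x − f(x))`. -/
noncomputable def legendre (f : ℝ → ℝ) (y : ℝ) : ℝ :=
  sSup (Set.range fun x => y * x - f x)

/-- `U_T(x) = ∫_{x̌}^x u_T`. -/
noncomputable def UT (uT : ℝ → ℝ) (xc x : ℝ) : ℝ := ∫ ξ in xc..x, uT ξ

/-- `U_o^♭(x) = sup_ξ [U_T(ξ) − T f*((ξ−x)/T)]`. -/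
noncomputable def Uflat (f : ℝ → ℝ) (T : ℝ) (uT : ℝ → ℝ) (xc x : ℝ) : ℝ :=
  sSup (Set.range fun ξ => UT uT xc ξ - T * legendre f ((ξ - x) / T))

/-- `M(x)`: the set of maximizers in the definition of `U_o^♭(x)`. -/
def MSet (f : ℝ → ℝ) (T : ℝ) (uT : ℝ → ℝ) (xc x : ℝ) : Set ℝ :=
  {ξ | UT uT xc ξ = Uflat f T uT xc x + T * legendre f ((ξ - x) / T)}

/-- Oleinik condition (O) at `T`. -/
def Oleinik (f : ℝ → ℝ) (T : ℝ) (uT : ℝ → ℝ) : Prop :=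
  ∀ x Δ : ℝ, 0 < Δ → deriv f (uT (x + Δ)) - deriv f (uT x) ≤ Δ / T

/-- The Hopf–Lax operator at time `T`: `(S_T U)(x) = inf_ξ [U(ξ) + T f*((x−ξ)/T)]`. -/
noncomputable def HopfLax (f : ℝ → ℝ) (T : ℝ) (U : ℝ → ℝ) (x : ℝ) : ℝ :=
  sInf (Set.range fun ξ => U ξ + T * legendre f ((x - ξ) / T))

/-- Left continuity of a real function. -/
def LeftCts (u : ℝ → ℝ) : Prop :=
  ∀ x, Tendsto u (nhdsWithin x (Set.Iio x)) (nhds (u x))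

/-- `II_T(U_T; J)`: Lipschitz functions with a.e. derivative in `J` evolving into `U_T`
under the Hopf–Lax semigroup. -/
def IIT (f : ℝ → ℝ) (T : ℝ) (uT : ℝ → ℝ) (xc : ℝ) (J : Set ℝ) : Set (ℝ → ℝ) :=
  {U | (∃ K, LipschitzWith K U) ∧ (∀ᵐ x ∂volume, deriv U x ∈ J) ∧
    ∀ x, HopfLax f T U x = UT uT xc x}

/-- `U_o^♯(x) = sup { U(x) : U ∈ II_T(U_T; J) }`. -/
noncomputable def Usharp (f : ℝ → ℝ) (T : ℝ) (uT : ℝ → ℝ) (xc : ℝ) (J : Set ℝ) (x : ℝ) : ℝ :=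
  sSup ((fun U : ℝ → ℝ => U x) '' IIT f T uT xc J)

section Helpers
open Set Topology
open scoped NNReal ENNReal

-- H1: tangent line inequality for convex f
lemma tangent_le {f : ℝ → ℝ} (hd : Differentiable ℝ f) (hsm : StrictMono (deriv f))
    (x y : ℝ) : f y + deriv f y * (x - y) ≤ f x := by
  rcases lt_trichotomy x y with h | h | h
  · obtain ⟨c, hc, hc2⟩ := exists_hasDerivAt_eq_slope f (deriv f) h
      (hd.continuous.continuousOn) (fun z _ => (hd z).hasDerivAt)
    have h1 : deriv f c ≤ deriv f y := (hsm.le_iff_le).2 hc.2.le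
    have h2 : deriv f c * (y - x) = f y - f x := by
      rw [hc2, div_mul_cancel₀]; linarith
    nlinarith [mul_le_mul_of_nonneg_right h1 (by linarith : (0:ℝ) ≤ y - x)]
  · simp [h]
  · obtain ⟨c, hc, hc2⟩ := exists_hasDerivAt_eq_slope f (deriv f) h
      (hd.continuous.continuousOn) (fun z _ => (hd z).hasDerivAt)
    have h1 : deriv f y ≤ deriv f c := (hsm.le_iff_le).2 hc.1.le
    have h2 : deriv f c * (x - y) = f x - f y := by
      rw [hc2, div_mul_cancel₀]; linarith
    nlinarith [mul_le_mul_of_nonneg_right h1 (by linarith : (0:ℝ) ≤ x - y)]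

-- H2
lemma legendre_isGreatest {f g : ℝ → ℝ} (hd : Differentiable ℝ f)
    (hsm : StrictMono (deriv f)) (hgr : ∀ y, deriv f (g y) = y) (y : ℝ) :
    IsGreatest (Set.range fun x => y * x - f x) (y * g y - f (g y)) := by
  constructor
  · exact ⟨g y, rfl⟩
  · rintro v ⟨x, rfl⟩
    have := tangent_le hd hsm x (g y)
    rw [hgr] at this
    show y * x - f x ≤ y * g y - f (g y)
    nlinarith

-- H3
lemma legendre_eq {f g : ℝ → ℝ} (hd : Differentiable ℝ f)
    (hsm : StrictMono (deriv f)) (hgr : ∀ y, deriv f (g y) = y) (y : ℝ) :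
    legendre f y = y * g y - f (g y) :=
  (legendre_isGreatest hd hsm hgr y).csSup_eq

lemma legendre_ge {f g : ℝ → ℝ} (hd : Differentiable ℝ f)
    (hsm : StrictMono (deriv f)) (hgr : ∀ y, deriv f (g y) = y) (y w : ℝ) :
    y * w - f w ≤ legendre f y := by
  rw [legendre, (legendre_isGreatest hd hsm hgr y).csSup_eq]
  exact (legendre_isGreatest hd hsm hgr y).2 ⟨w, rfl⟩

-- H4 superlinearity
lemma legendre_superlinear {f g : ℝ → ℝ} (hd : Differentiable ℝ f)
    (hsm : StrictMono (deriv f)) (hgr : ∀ y, deriv f (g y) = y) {M : ℝ} (hM : 0 ≤ M) (z : ℝ) :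
    M * |z| - max (f M) (f (-M)) ≤ legendre f z := by
  rcases le_or_gt 0 z with hz | hz
  · have := legendre_ge hd hsm hgr z M
    have : z * M - f M ≤ legendre f z := this
    rw [abs_of_nonneg hz]
    have := le_max_left (f M) (f (-M))
    nlinarith
  · have h1 := legendre_ge hd hsm hgr z (-M)
    rw [abs_of_neg hz]
    have := le_max_right (f M) (f (-M))
    nlinarith

-- key inequality: tangent line to legendre
lemma legendre_tangent {f g : ℝ → ℝ} (hd : Differentiable ℝ f)
    (hsm : StrictMono (deriv f)) (hgr : ∀ y, deriv f (g y) = y) (z z' : ℝ) :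
    legendre f z + g z * (z' - z) ≤ legendre f z' := by
  have h1 := legendre_ge hd hsm hgr z' (g z)
  rw [legendre_eq hd hsm hgr z]
  nlinarith

-- H5 derivative of legendre
lemma hasDerivAt_legendre {f g : ℝ → ℝ} (hd : Differentiable ℝ f)
    (hsm : StrictMono (deriv f)) (hgr : ∀ y, deriv f (g y) = y)
    (hgc : Continuous g) (z : ℝ) :
    HasDerivAt (legendre f) (g z) z := by
  rw [hasDerivAt_iff_tendsto_slope]
  have hmin : Tendsto (fun z' => min (g z) (g z')) (𝓝[≠] z) (𝓝 (g z)) := by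
    have : Tendsto (fun z' => min (g z) (g z')) (𝓝 z) (𝓝 (min (g z) (g z))) :=
      (tendsto_const_nhds.min (hgc.tendsto z))
    simpa using this.mono_left nhdsWithin_le_nhds
  have hmax : Tendsto (fun z' => max (g z) (g z')) (𝓝[≠] z) (𝓝 (g z)) := by
    have : Tendsto (fun z' => max (g z) (g z')) (𝓝 z) (𝓝 (max (g z) (g z))) :=
      (tendsto_const_nhds.max (hgc.tendsto z))
    simpa using this.mono_left nhdsWithin_le_nhds
  refine tendsto_of_tendsto_of_tendsto_of_le_of_le' hmin hmax ?_ ?_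
  · filter_upwards [self_mem_nhdsWithin] with z' (hz' : z' ≠ z)
    have h1 := legendre_tangent hd hsm hgr z z'
    have h2 := legendre_tangent hd hsm hgr z' z
    rcases lt_or_gt_of_ne hz' with h | h
    · -- z' < z : slope ≥ g z'
      refine le_trans (min_le_right _ _) ?_
      rw [slope_def_field, le_div_iff_of_neg (by linarith : z' - z < 0)]
      nlinarith
    · refine le_trans (min_le_left _ _) ?_
      rw [slope_def_field, le_div_iff₀ (by linarith : 0 < z' - z)]
      nlinarith
  · filter_upwards [self_mem_nhdsWithin] with z' (hz' : z' ≠ z)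
    have h1 := legendre_tangent hd hsm hgr z z'
    have h2 := legendre_tangent hd hsm hgr z' z
    rcases lt_or_gt_of_ne hz' with h | h
    · refine le_trans ?_ (le_max_left _ _)
      rw [slope_def_field, div_le_iff_of_neg (by linarith : z' - z < 0)]
      nlinarith
    · refine le_trans ?_ (le_max_right _ _)
      rw [slope_def_field, div_le_iff₀ (by linarith : 0 < z' - z)]
      nlinarith

-- H7 FTC for legendre along characteristics
lemma legendre_FTC {f g : ℝ → ℝ} (hd : Differentiable ℝ f)
    (hsm : StrictMono (deriv f)) (hgr : ∀ y, deriv f (g y) = y)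
    (hgc : Continuous g) {T : ℝ} (hT : 0 < T) (η x ξ : ℝ) :
    (∫ s in x..ξ, g ((s - η) / T)) =
      T * legendre f ((ξ - η) / T) - T * legendre f ((x - η) / T) := by
  have hF : ∀ s : ℝ, HasDerivAt (fun s => T * legendre f ((s - η) / T)) (g ((s - η) / T)) s := by
    intro s
    have h1 : HasDerivAt (fun s : ℝ => (s - η) / T) (1 / T) s :=
      ((hasDerivAt_id s).sub_const η).div_const T
    have h2 := (hasDerivAt_legendre hd hsm hgr hgc ((s - η) / T)).comp s h1
    have h3 := h2.const_mul T
    exact h3.congr_deriv (by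
      rw [one_div, ← mul_assoc, mul_comm T, mul_assoc, mul_inv_cancel₀ hT.ne', mul_one])
  rw [intervalIntegral.integral_eq_sub_of_hasDerivAt (fun s _ => hF s)
    ((hgc.comp (by continuity)).intervalIntegrable x ξ)]

-- H8 interval integrability of uT
lemma uT_intervalIntegrable {uT : ℝ → ℝ} (huT : Measurable uT) {a b : ℝ}
    (huTJ : ∀ x, uT x ∈ Set.Icc a b) (x y : ℝ) :
    IntervalIntegrable uT volume x y := by
  have : ∀ s t : ℝ, IntegrableOn uT (Set.Ioc s t) volume := by
    intro s t
    apply Measure.integrableOn_of_bounded (M := max |a| |b|) (by simp) huT.aestronglyMeasurable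
    filter_upwards with z
    rcases huTJ z with ⟨h1, h2⟩
    rw [Real.norm_eq_abs, abs_le]
    constructor
    · have := neg_abs_le a; have := le_abs_self b
      have := le_max_left |a| |b|; linarith
    · have := le_abs_self b; have := le_max_right |a| |b|; linarith
  exact ⟨this x y, this y x⟩

-- H9
lemma UT_diff {uT : ℝ → ℝ} (huT : Measurable uT) {a b : ℝ}
    (huTJ : ∀ x, uT x ∈ Set.Icc a b) (xc ζ ξ : ℝ) :
    UT uT xc ξ - UT uT xc ζ = ∫ s in ζ..ξ, uT s := by
  rw [UT, UT, intervalIntegral.integral_interval_sub_left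
    (uT_intervalIntegrable huT huTJ xc ξ) (uT_intervalIntegrable huT huTJ xc ζ)]

-- H10
lemma UT_slope {uT : ℝ → ℝ} (huT : Measurable uT) {a b : ℝ}
    (huTJ : ∀ x, uT x ∈ Set.Icc a b) (xc : ℝ) {ζ ξ : ℝ} (h : ζ ≤ ξ) :
    a * (ξ - ζ) ≤ UT uT xc ξ - UT uT xc ζ ∧ UT uT xc ξ - UT uT xc ζ ≤ b * (ξ - ζ) := by
  rw [UT_diff huT huTJ]
  constructor
  · have : (∫ s in ζ..ξ, a) ≤ ∫ s in ζ..ξ, uT s := by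
      apply intervalIntegral.integral_mono_on h (intervalIntegrable_const)
        (uT_intervalIntegrable huT huTJ ζ ξ)
      exact fun s _ => (huTJ s).1
    simpa [mul_comm] using this
  · have : (∫ s in ζ..ξ, uT s) ≤ ∫ s in ζ..ξ, b := by
      apply intervalIntegral.integral_mono_on h (uT_intervalIntegrable huT huTJ ζ ξ)
        intervalIntegrable_const
      exact fun s _ => (huTJ s).2
    simpa [mul_comm] using this

-- H11 candidate bound
lemma cand_le {f g uT : ℝ → ℝ} (hd : Differentiable ℝ f) (hsm : StrictMono (deriv f))
    (hgr : ∀ y, deriv f (g y) = y) {T a b : ℝ} (hT : 0 < T)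
    (huT : Measurable uT) (huTJ : ∀ x, uT x ∈ Set.Icc a b) (xc x ξ : ℝ) :
    UT uT xc ξ - T * legendre f ((ξ - x) / T) ≤
      UT uT xc x + T * max (f (max |a| |b| + 1)) (f (-(max |a| |b| + 1))) - |ξ - x| := by
  set L := max |a| |b| with hL
  have hUT : UT uT xc ξ - UT uT xc x ≤ L * |ξ - x| := by
    rcases le_or_gt x ξ with h | h
    · have := (UT_slope huT huTJ xc h).2
      have hb : b ≤ L := le_trans (le_abs_self b) (le_max_right _ _)
      rw [abs_of_nonneg (by linarith : (0:ℝ) ≤ ξ - x)]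
      nlinarith
    · have := (UT_slope huT huTJ xc h.le).1
      have ha : -a ≤ L := le_trans (neg_le_abs a) (le_max_left _ _)
      rw [abs_of_nonpos (by linarith : ξ - x ≤ 0)]
      nlinarith
  have hleg := legendre_superlinear hd hsm hgr (by positivity : (0:ℝ) ≤ L + 1) ((ξ - x) / T)
  have habs : |(ξ - x) / T| = |ξ - x| / T := by
    rw [abs_div, abs_of_pos hT]
  rw [habs] at hleg
  have hTleg : (L + 1) * |ξ - x| - T * max (f (L + 1)) (f (-(L + 1))) ≤
      T * legendre f ((ξ - x) / T) := by
    have := mul_le_mul_of_nonneg_left hleg hT.le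
    have hne : T ≠ 0 := hT.ne'
    calc (L + 1) * |ξ - x| - T * max (f (L + 1)) (f (-(L + 1)))
        = T * ((L + 1) * (|ξ - x| / T) - max (f (L + 1)) (f (-(L + 1)))) := by field_simp
      _ ≤ T * legendre f ((ξ - x) / T) := this
  linarith

lemma Uflat_bddAbove {f g uT : ℝ → ℝ} (hd : Differentiable ℝ f) (hsm : StrictMono (deriv f))
    (hgr : ∀ y, deriv f (g y) = y) {T a b : ℝ} (hT : 0 < T)
    (huT : Measurable uT) (huTJ : ∀ x, uT x ∈ Set.Icc a b) (xc x : ℝ) :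
    BddAbove (Set.range fun ξ => UT uT xc ξ - T * legendre f ((ξ - x) / T)) := by
  refine ⟨UT uT xc x + T * max (f (max |a| |b| + 1)) (f (-(max |a| |b| + 1))), ?_⟩
  rintro v ⟨ξ, rfl⟩
  have := cand_le hd hsm hgr hT huT huTJ xc x ξ (g := g)
  have h0 : (0:ℝ) ≤ |ξ - x| := abs_nonneg _
  dsimp only
  linarith

lemma le_Uflat {f g uT : ℝ → ℝ} (hd : Differentiable ℝ f) (hsm : StrictMono (deriv f))
    (hgr : ∀ y, deriv f (g y) = y) {T a b : ℝ} (hT : 0 < T)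
    (huT : Measurable uT) (huTJ : ∀ x, uT x ∈ Set.Icc a b) (xc x ξ : ℝ) :
    UT uT xc ξ - T * legendre f ((ξ - x) / T) ≤ Uflat f T uT xc x :=
  le_csSup (Uflat_bddAbove hd hsm hgr hT huT huTJ xc x (g := g)) ⟨ξ, rfl⟩


-- H12: Oleinik gives a characteristic point
lemma oleinik_key {f g uT : ℝ → ℝ} (hd : Differentiable ℝ f) (hsm : StrictMono (deriv f))
    (hgr : ∀ y, deriv f (g y) = y) (hgl : ∀ x, g (deriv f x) = x) (hgc : Continuous g)
    {T a b : ℝ} (hT : 0 < T) (huT : Measurable uT) (huTJ : ∀ x, uT x ∈ Set.Icc a b)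
    (hO : Oleinik f T uT) (xc x : ℝ) :
    ∃ η : ℝ, ∀ ξ : ℝ, UT uT xc ξ - UT uT xc x ≤
      T * legendre f ((ξ - η) / T) - T * legendre f ((x - η) / T) := by
  refine ⟨x - T * deriv f (uT x), fun ξ => ?_⟩
  have hmono : Monotone g := by
    intro u v huv
    by_contra hlt
    push_neg at hlt
    have := hsm hlt
    rw [hgr, hgr] at this
    exact absurd this (not_lt.2 huv)
  have harg : ∀ s : ℝ, (s - (x - T * deriv f (uT x))) / T = deriv f (uT x) + (s - x) / T := by
    intro s
    field_simp
    ring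
  have key_ge : ∀ s, x ≤ s → uT s ≤ g ((s - (x - T * deriv f (uT x))) / T) := by
    intro s hs
    rw [harg]
    rcases eq_or_lt_of_le hs with h | h
    · rw [← h]
      simp [hgl]
    · have h1 := hO x (s - x) (by linarith)
      rw [show x + (s - x) = s by ring] at h1
      have h2 : deriv f (uT s) ≤ deriv f (uT x) + (s - x) / T := by linarith
      calc uT s = g (deriv f (uT s)) := (hgl _).symm
        _ ≤ _ := hmono h2
  have key_le : ∀ s, s ≤ x → g ((s - (x - T * deriv f (uT x))) / T) ≤ uT s := by
    intro s hs
    rw [harg]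
    rcases eq_or_lt_of_le hs with h | h
    · rw [h]
      simp [hgl]
    · have h1 := hO s (x - s) (by linarith)
      rw [show s + (x - s) = x by ring] at h1
      have h2 : deriv f (uT x) + (s - x) / T ≤ deriv f (uT s) := by
        have e : (s - x) / T = -((x - s) / T) := by ring
        rw [e]; linarith
      calc g (deriv f (uT x) + (s - x) / T) ≤ g (deriv f (uT s)) := hmono h2
        _ = uT s := hgl _
  have hG : Continuous fun s => g ((s - (x - T * deriv f (uT x))) / T) := hgc.comp (by continuity)
  rw [← legendre_FTC hd hsm hgr hgc hT (x - T * deriv f (uT x)) x ξ, UT_diff huT huTJ]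
  rcases le_or_gt x ξ with h | h
  · apply intervalIntegral.integral_mono_on h (uT_intervalIntegrable huT huTJ x ξ)
      (hG.intervalIntegrable x ξ)
    exact fun s hs => key_ge s hs.1
  · have e1 : (∫ s in x..ξ, uT s) = -∫ s in ξ..x, uT s := intervalIntegral.integral_symm ξ x
    have e2 : (∫ s in x..ξ, g ((s - (x - T * deriv f (uT x))) / T)) =
        -∫ s in ξ..x, g ((s - (x - T * deriv f (uT x))) / T) := intervalIntegral.integral_symm ξ x
    have h3 : (∫ s in ξ..x, g ((s - (x - T * deriv f (uT x))) / T)) ≤ ∫ s in ξ..x, uT s := by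
      apply intervalIntegral.integral_mono_on h.le (hG.intervalIntegrable ξ x)
        (uT_intervalIntegrable huT huTJ ξ x)
      exact fun s hs => key_le s hs.2
    rw [e1, e2]
    linarith

-- H13: Hopf-Lax of Uflat recovers UT
lemma hopfLax_Uflat {f g uT : ℝ → ℝ} (hd : Differentiable ℝ f) (hsm : StrictMono (deriv f))
    (hgr : ∀ y, deriv f (g y) = y) (hgl : ∀ x, g (deriv f x) = x) (hgc : Continuous g)
    {T a b : ℝ} (hT : 0 < T) (huT : Measurable uT) (huTJ : ∀ x, uT x ∈ Set.Icc a b)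
    (hO : Oleinik f T uT) (xc x : ℝ) :
    HopfLax f T (Uflat f T uT xc) x = UT uT xc x := by
  have hge : ∀ η', UT uT xc x ≤ Uflat f T uT xc η' + T * legendre f ((x - η') / T) := by
    intro η'
    have := le_Uflat hd hsm hgr hT huT huTJ xc η' x (g := g)
    linarith
  apply le_antisymm
  · obtain ⟨η, hη⟩ := oleinik_key hd hsm hgr hgl hgc hT huT huTJ hO xc x
    have h1 : Uflat f T uT xc η + T * legendre f ((x - η) / T) ≤ UT uT xc x := by
      have h2 : Uflat f T uT xc η ≤ UT uT xc x - T * legendre f ((x - η) / T) := by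
        apply csSup_le (Set.range_nonempty _)
        rintro v ⟨ξ, rfl⟩
        have := hη ξ
        dsimp only
        linarith
      linarith
    exact le_trans (csInf_le ⟨UT uT xc x, by rintro v ⟨η', rfl⟩; exact hge η'⟩ ⟨η, rfl⟩) h1
  · exact le_csInf (Set.range_nonempty _) (by rintro v ⟨η', rfl⟩; exact hge η')

-- H14: slope bounds for Uflat
lemma Uflat_slope {f g uT : ℝ → ℝ} (hd : Differentiable ℝ f) (hsm : StrictMono (deriv f))
    (hgr : ∀ y, deriv f (g y) = y) {T a b : ℝ} (hT : 0 < T)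
    (huT : Measurable uT) (huTJ : ∀ x, uT x ∈ Set.Icc a b) (xc : ℝ) {x₁ x₂ : ℝ} (h : x₁ ≤ x₂) :
    a * (x₂ - x₁) ≤ Uflat f T uT xc x₂ - Uflat f T uT xc x₁ ∧
      Uflat f T uT xc x₂ - Uflat f T uT xc x₁ ≤ b * (x₂ - x₁) := by
  constructor
  · have h0 : Uflat f T uT xc x₁ ≤ Uflat f T uT xc x₂ - a * (x₂ - x₁) := by
      apply csSup_le (Set.range_nonempty _)
      rintro v ⟨ξ, rfl⟩
      have h1 : UT uT xc (ξ + (x₂ - x₁)) - T * legendre f ((ξ + (x₂ - x₁) - x₂) / T) ≤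
          Uflat f T uT xc x₂ :=
        le_Uflat hd hsm hgr hT huT huTJ xc x₂ (ξ + (x₂ - x₁)) (g := g)
      have h2 := (UT_slope huT huTJ xc (by linarith : ξ ≤ ξ + (x₂ - x₁))).1
      have e2 : ξ + (x₂ - x₁) - ξ = x₂ - x₁ := by ring
      rw [e2] at h2
      have harg : ξ + (x₂ - x₁) - x₂ = ξ - x₁ := by ring
      rw [harg] at h1
      dsimp only
      linarith
    linarith
  · have h0 : Uflat f T uT xc x₂ ≤ Uflat f T uT xc x₁ + b * (x₂ - x₁) := by
      apply csSup_le (Set.range_nonempty _)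
      rintro v ⟨ξ, rfl⟩
      have h1 : UT uT xc (ξ - (x₂ - x₁)) - T * legendre f ((ξ - (x₂ - x₁) - x₁) / T) ≤
          Uflat f T uT xc x₁ :=
        le_Uflat hd hsm hgr hT huT huTJ xc x₁ (ξ - (x₂ - x₁)) (g := g)
      have h2 := (UT_slope huT huTJ xc (by linarith : ξ - (x₂ - x₁) ≤ ξ)).2
      have e2 : ξ - (ξ - (x₂ - x₁)) = x₂ - x₁ := by ring
      rw [e2] at h2
      have harg : ξ - (x₂ - x₁) - x₁ = ξ - x₂ := by ring
      rw [harg] at h1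
      dsimp only
      linarith
    linarith

-- H17: a Lipschitz function with a.e. derivative ≥ c has slopes ≥ c
lemma slope_ge_of_ae_deriv_ge {W : ℝ → ℝ} {K : ℝ≥0} (hW : LipschitzWith K W) {c : ℝ}
    (h : ∀ᵐ x ∂volume, c ≤ deriv W x) {x y : ℝ} (hxy : x ≤ y) :
    c * (y - x) ≤ W y - W x := by
  set M : ℝ := (K : ℝ) + |c| + 1 with hM
  have hK0 : (0:ℝ) ≤ (K : ℝ) := K.2
  have hcM : 1 ≤ c + M := by
    have := neg_abs_le c
    simp only [hM]
    linarith
  have hmono : Monotone (fun z => W z + M * z) := by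
    intro u v huv
    have hd := hW.dist_le_mul u v
    rw [Real.dist_eq, Real.dist_eq, abs_of_nonpos (by linarith : u - v ≤ 0)] at hd
    have h1 := le_abs_self (W u - W v)
    dsimp only
    nlinarith [abs_nonneg c]
  have hcont : Continuous (fun z => W z + M * z) :=
    hW.continuous.add (continuous_const.mul continuous_id)
  have hSeq : ∀ z, hmono.stieltjesFunction z = W z + M * z := by
    intro z
    rw [Monotone.stieltjesFunction_eq]
    exact rightLim_eq_of_tendsto
      ((hcont.tendsto z).mono_left nhdsWithin_le_nhds)
  have hSfun : ⇑hmono.stieltjesFunction = fun z => W z + M * z := funext hSeq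
  have hae2 : ∀ᵐ z ∂volume,
      ENNReal.ofReal (c + M) ≤ Measure.rnDeriv hmono.stieltjesFunction.measure volume z := by
    filter_upwards [hmono.ae_hasDerivAt, h, hW.ae_differentiableAt] with z h1 h2 h3
    rcases eq_or_ne (Measure.rnDeriv hmono.stieltjesFunction.measure volume z) ⊤ with htop | htop
    · simp [htop]
    · have hd2 : HasDerivAt (fun z => W z + M * z) (deriv W z + M) z := by
        have hb : HasDerivAt (fun z : ℝ => M * z) (M * 1) z := (hasDerivAt_id z).const_mul M
        exact (h3.hasDerivAt.add hb).congr_deriv (by ring)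
      have huniq := h1.unique hd2
      rw [ENNReal.ofReal_le_iff_le_toReal htop, huniq]
      linarith
  have hlow : ENNReal.ofReal ((c + M) * (y - x)) ≤
      hmono.stieltjesFunction.measure (Set.Ioc x y) := by
    calc ENNReal.ofReal ((c + M) * (y - x))
        = ENNReal.ofReal (c + M) * volume (Set.Ioc x y) := by
          rw [Real.volume_Ioc, ENNReal.ofReal_mul (by linarith)]
      _ = ∫⁻ _ in Set.Ioc x y, ENNReal.ofReal (c + M) ∂volume := (setLIntegral_const _ _).symm
      _ ≤ ∫⁻ z in Set.Ioc x y, Measure.rnDeriv hmono.stieltjesFunction.measure volume z ∂volume :=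
          lintegral_mono_ae (ae_restrict_of_ae hae2)
      _ ≤ hmono.stieltjesFunction.measure (Set.Ioc x y) :=
          Measure.setLIntegral_rnDeriv_le _
  rw [StieltjesFunction.measure_Ioc] at hlow
  have hS0 : 0 ≤ hmono.stieltjesFunction y - hmono.stieltjesFunction x := by
    rw [hSeq, hSeq]
    have := hmono (le_refl x)
    have h2 : (fun z => W z + M * z) x ≤ (fun z => W z + M * z) y := hmono hxy
    dsimp only at h2
    linarith
  have hfin := (ENNReal.ofReal_le_ofReal_iff hS0).1 hlow
  rw [hSeq, hSeq] at hfin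
  nlinarith

lemma slope_le_of_ae_deriv_le {W : ℝ → ℝ} {K : ℝ≥0} (hW : LipschitzWith K W) {c : ℝ}
    (h : ∀ᵐ x ∂volume, deriv W x ≤ c) {x y : ℝ} (hxy : x ≤ y) :
    W y - W x ≤ c * (y - x) := by
  have hneg : ∀ᵐ x ∂volume, -c ≤ deriv (fun z => -W z) x := by
    filter_upwards [h] with z hz
    rw [deriv.fun_neg]
    linarith
  have := slope_ge_of_ae_deriv_ge (hW.neg) hneg hxy
  simp only [Pi.neg_apply] at this
  linarith

lemma slope_of_ae_deriv_mem {W : ℝ → ℝ} (hW : ∃ K, LipschitzWith K W) {a b : ℝ}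
    (h : ∀ᵐ x ∂volume, deriv W x ∈ Set.Icc a b) {x y : ℝ} (hxy : x ≤ y) :
    a * (y - x) ≤ W y - W x ∧ W y - W x ≤ b * (y - x) := by
  obtain ⟨K, hK⟩ := hW
  constructor
  · exact slope_ge_of_ae_deriv_ge hK (by filter_upwards [h] with z hz; exact hz.1) hxy
  · exact slope_le_of_ae_deriv_le hK (by filter_upwards [h] with z hz; exact hz.2) hxy

-- H15: slope bounds give a Lipschitz constant
lemma lipschitzWith_of_slope {W : ℝ → ℝ} {a b : ℝ}
    (h : ∀ x y : ℝ, x ≤ y → a * (y - x) ≤ W y - W x ∧ W y - W x ≤ b * (y - x)) :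
    LipschitzWith (Real.toNNReal (max |a| |b|)) W := by
  apply LipschitzWith.of_dist_le_mul
  intro x y
  rw [Real.dist_eq, Real.dist_eq, Real.coe_toNNReal _ (by positivity)]
  have hLa := le_max_left |a| |b|
  have hLb := le_max_right |a| |b|
  have ha1 := le_abs_self a; have ha2 := neg_abs_le a
  have hb1 := le_abs_self b; have hb2 := neg_abs_le b
  rcases le_total x y with hxy | hxy
  · obtain ⟨h1, h2⟩ := h x y hxy
    rw [abs_of_nonpos (by linarith : x - y ≤ 0), abs_le]
    constructor <;> nlinarith
  · obtain ⟨h1, h2⟩ := h y x hxy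
    rw [abs_of_nonneg (by linarith : 0 ≤ x - y), abs_le]
    constructor <;> nlinarith

-- H16: slope bounds give a.e. derivative in the interval
lemma ae_deriv_mem_of_slope {W : ℝ → ℝ} {a b : ℝ}
    (h : ∀ x y : ℝ, x ≤ y → a * (y - x) ≤ W y - W x ∧ W y - W x ≤ b * (y - x)) :
    ∀ᵐ x ∂volume, deriv W x ∈ Set.Icc a b := by
  have hlip := lipschitzWith_of_slope h
  filter_upwards [hlip.ae_differentiableAt] with x hx
  have ht : Tendsto (slope W x) (𝓝[>] x) (𝓝 (deriv W x)) :=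
    (hasDerivAt_iff_tendsto_slope.1 hx.hasDerivAt).mono_left
      (nhdsWithin_mono x fun y hy => ne_of_gt hy)
  refine isClosed_Icc.mem_of_tendsto ht ?_
  filter_upwards [self_mem_nhdsWithin] with y (hy : x < y)
  obtain ⟨h1, h2⟩ := h x y hy.le
  rw [slope_def_field]
  constructor
  · rw [le_div_iff₀ (by linarith : 0 < y - x)]; linarith
  · rw [div_le_iff₀ (by linarith : 0 < y - x)]; linarith

lemma Tlegendre_ge {f g : ℝ → ℝ} (hd : Differentiable ℝ f) (hsm : StrictMono (deriv f))
    (hgr : ∀ y, deriv f (g y) = y) {T : ℝ} (hT : 0 < T) {L : ℝ} (hL : 0 ≤ L) (w : ℝ) :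
    (L + 1) * |w| - T * max (f (L + 1)) (f (-(L + 1))) ≤ T * legendre f (w / T) := by
  have hleg := legendre_superlinear hd hsm hgr (by positivity : (0:ℝ) ≤ L + 1) (w / T)
  have habs : |w / T| = |w| / T := by rw [abs_div, abs_of_pos hT]
  rw [habs] at hleg
  have := mul_le_mul_of_nonneg_left hleg hT.le
  calc (L + 1) * |w| - T * max (f (L + 1)) (f (-(L + 1)))
      = T * ((L + 1) * (|w| / T) - max (f (L + 1)) (f (-(L + 1)))) := by field_simp
    _ ≤ T * legendre f (w / T) := this


end Helpers

open Set Topology in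
theorem stmt_15 (f : ℝ → ℝ) (hf : CondF f) (T : ℝ) (hT : 0 < T)
    (a b : ℝ) (hab : a ≤ b)
    (uT : ℝ → ℝ) (huT : Measurable uT)
    (hlc : LeftCts uT) (huTJ : ∀ x, uT x ∈ Set.Icc a b) (hO : Oleinik f T uT) (xc : ℝ) :
    (∀ x : ℝ, ((fun U : ℝ → ℝ => U x) '' IIT f T uT xc (Set.Icc a b)).Nonempty ∧
      BddAbove ((fun U : ℝ → ℝ => U x) '' IIT f T uT xc (Set.Icc a b))) ∧
    (∀ x₁ x₂ : ℝ, x₁ < x₂ →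
      a * (x₂ - x₁) ≤ Usharp f T uT xc (Set.Icc a b) x₂ - Usharp f T uT xc (Set.Icc a b) x₁ ∧
      Usharp f T uT xc (Set.Icc a b) x₂ - Usharp f T uT xc (Set.Icc a b) x₁ ≤ b * (x₂ - x₁)) ∧
    (∃ K, LipschitzWith K (Usharp f T uT xc (Set.Icc a b))) ∧
    (∀ᵐ x ∂volume, deriv (Usharp f T uT xc (Set.Icc a b)) x ∈ Set.Icc a b) := by
  obtain ⟨hC2, hpos, hbot, htop⟩ := hf
  have hd : Differentiable ℝ f := hC2.differentiable (by norm_num)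
  have h21 : ContDiff ℝ ((1:ℕ) + 1) f := by exact_mod_cast hC2
  have hd' : Differentiable ℝ (deriv f) :=
    ((contDiff_succ_iff_deriv.1 h21).2.2).differentiable (by norm_num)
  have hsm : StrictMono (deriv f) := strictMono_of_deriv_pos hpos
  have hc : Continuous (deriv f) := hd'.continuous
  have hsurj : Function.Surjective (deriv f) := hc.surjective htop hbot
  let e := StrictMono.orderIsoOfSurjective (deriv f) hsm hsurj
  let g : ℝ → ℝ := ⇑e.symm
  have hgr : ∀ y, deriv f (g y) = y := fun y => e.apply_symm_apply y
  have hgl : ∀ x, g (deriv f x) = x := fun x => e.symm_apply_apply x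
  have hgc : Continuous g := e.symm.continuous
  -- slope bounds for Uflat and membership in IIT
  have hUslope : ∀ x y : ℝ, x ≤ y →
      a * (y - x) ≤ Uflat f T uT xc y - Uflat f T uT xc x ∧
      Uflat f T uT xc y - Uflat f T uT xc x ≤ b * (y - x) :=
    fun x y hxy => Uflat_slope hd hsm hgr hT huT huTJ xc hxy (g := g)
  have hUflat_mem : Uflat f T uT xc ∈ IIT f T uT xc (Set.Icc a b) :=
    ⟨⟨_, lipschitzWith_of_slope hUslope⟩, ae_deriv_mem_of_slope hUslope,
      fun x => hopfLax_Uflat hd hsm hgr hgl hgc hT huT huTJ hO xc x⟩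
  have hslope : ∀ U ∈ IIT f T uT xc (Set.Icc a b), ∀ x y : ℝ, x ≤ y →
      a * (y - x) ≤ U y - U x ∧ U y - U x ≤ b * (y - x) :=
    fun U hU x y hxy => slope_of_ae_deriv_mem hU.1 hU.2.1 hxy
  have hbdd : ∀ x : ℝ, BddAbove ((fun U : ℝ → ℝ => U x) '' IIT f T uT xc (Set.Icc a b)) := by
    intro x
    refine ⟨UT uT xc x + 1 + T * max (f (max |a| |b| + 1)) (f (-(max |a| |b| + 1))), ?_⟩
    rintro v ⟨U, hU, rfl⟩
    have hHL := hU.2.2 x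
    have hlt : sInf (Set.range fun ξ => U ξ + T * legendre f ((x - ξ) / T)) <
        UT uT xc x + 1 := by rw [HopfLax] at hHL; rw [hHL]; linarith
    obtain ⟨w, ⟨ξ, rfl⟩, hv⟩ := exists_lt_of_csInf_lt (Set.range_nonempty _) hlt
    dsimp only at hv
    have hUL : U x - U ξ ≤ max |a| |b| * |x - ξ| := by
      rcases le_total ξ x with h | h
      · have := (hslope U hU ξ x h).2
        rw [abs_of_nonneg (by linarith : (0:ℝ) ≤ x - ξ)]
        nlinarith [le_abs_self b, le_max_right |a| |b|]
      · have := (hslope U hU x ξ h).1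
        rw [abs_of_nonpos (by linarith : x - ξ ≤ 0)]
        nlinarith [neg_le_abs a, le_max_left |a| |b|]
    have hsl := Tlegendre_ge hd hsm hgr hT (by positivity : (0:ℝ) ≤ max |a| |b|) (x - ξ)
      (g := g)
    have h0 : (0:ℝ) ≤ |x - ξ| := abs_nonneg _
    dsimp only
    linarith
  have hne : ∀ x : ℝ, ((fun U : ℝ → ℝ => U x) '' IIT f T uT xc (Set.Icc a b)).Nonempty :=
    fun x => ⟨Uflat f T uT xc x, Uflat f T uT xc, hUflat_mem, rfl⟩
  have hsharp_slope : ∀ x₁ x₂ : ℝ, x₁ ≤ x₂ →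
      a * (x₂ - x₁) ≤ Usharp f T uT xc (Set.Icc a b) x₂ - Usharp f T uT xc (Set.Icc a b) x₁ ∧
      Usharp f T uT xc (Set.Icc a b) x₂ - Usharp f T uT xc (Set.Icc a b) x₁ ≤ b * (x₂ - x₁) := by
    intro x₁ x₂ hx
    constructor
    · have h0 : Usharp f T uT xc (Set.Icc a b) x₁ ≤
          Usharp f T uT xc (Set.Icc a b) x₂ - a * (x₂ - x₁) := by
        apply csSup_le (hne x₁)
        rintro v ⟨U, hU, rfl⟩
        have h1 := (hslope U hU x₁ x₂ hx).1
        have h2 : U x₂ ≤ Usharp f T uT xc (Set.Icc a b) x₂ :=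
          le_csSup (hbdd x₂) ⟨U, hU, rfl⟩
        dsimp only
        linarith
      linarith
    · have h0 : Usharp f T uT xc (Set.Icc a b) x₂ ≤
          Usharp f T uT xc (Set.Icc a b) x₁ + b * (x₂ - x₁) := by
        apply csSup_le (hne x₂)
        rintro v ⟨U, hU, rfl⟩
        have h1 := (hslope U hU x₁ x₂ hx).2
        have h2 : U x₁ ≤ Usharp f T uT xc (Set.Icc a b) x₁ :=
          le_csSup (hbdd x₁) ⟨U, hU, rfl⟩
        dsimp only
        linarith
      linarith
  refine ⟨fun x => ⟨hne x, hbdd x⟩, fun x₁ x₂ hx => hsharp_slope x₁ x₂ hx.le, ?_, ?_⟩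
  · exact ⟨_, lipschitzWith_of_slope fun x y hxy => hsharp_slope x y hxy⟩
  · exact ae_deriv_mem_of_slope fun x y hxy => hsharp_slope x y hxy
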